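/- In the spatial Schwarzschild manifold (M_{r₀}, g^S_m) with m ≠ 0 and r₀ > 2m, the harmonic function u that vanishes on the boundary {r = r₀} and tends to 1 at infinity is u = (v − v(r₀))/(1 − v(r₀)) with v(r) = √(1 − 2m/r), and the capacity of the boundary equals (1/(4π)) ∫_M |∇u|² dg = m / (1 − √(1 − 2m/r₀)). -/

import Mathlib

open MeasureTheory Set Filter Real

/-- In the spatial Schwarzschild manifold `(M_{r₀}, g^S_m)`, `m ≠ 0`, `r₀ > 2m`,
the harmonic function vanishing on `{r = r₀}` and tending to `1` at `∞` is
`u = (v - v(r₀))/(1 - v(r₀))`, `v(r) = √(1-2m/r)`, and the capacity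
`(1/(4π)) ∫_M |∇u|² dg` equals `m/(1 - √(1-2m/r₀))`.  For a radial function the
Laplacian is `r⁻²√(1-2m/r) d/dr (r²√(1-2m/r) u')` and the Dirichlet energy is
`∫_M |∇u|² dg = 4π ∫_{r₀}^∞ r²√(1-2m/r) u'(r)² dr`. -/
theorem stmt5 (m r₀ : ℝ) (hm : m ≠ 0) (hr₀ : 0 < r₀) (h2m : 2 * m < r₀)
    (v u : ℝ → ℝ)
    (hv : ∀ r, v r = Real.sqrt (1 - 2 * m / r))
    (hu : ∀ r, u r = (v r - v r₀) / (1 - v r₀)) :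
    u r₀ = 0 ∧ Tendsto u atTop (nhds 1) ∧
    (∀ r, r₀ ≤ r →
      deriv (fun s => s ^ 2 * Real.sqrt (1 - 2 * m / s) * deriv u s) r = 0) ∧
    (1 / (4 * π)) *
        (4 * π * ∫ r in Ioi r₀, r ^ 2 * Real.sqrt (1 - 2 * m / r) * (deriv u r) ^ 2)
      = m / (1 - Real.sqrt (1 - 2 * m / r₀)) := by
  -- basic facts
  have hr₀ne : r₀ ≠ 0 := ne_of_gt hr₀
  have ht₀pos : (0:ℝ) < 1 - 2 * m / r₀ := by
    rw [sub_pos, div_lt_one hr₀]; exact h2m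
  have hv₀ : v r₀ = Real.sqrt (1 - 2 * m / r₀) := hv r₀
  have ht₀ne : (1:ℝ) - 2 * m / r₀ ≠ 1 := by
    intro h
    have h1 : 2 * m / r₀ = 0 := by linarith
    have h2 : 2 * m = 0 := by
      rcases div_eq_zero_iff.mp h1 with h | h
      · exact h
      · exact absurd h hr₀ne
    exact hm (by linarith)
  have hc₀ : 1 - v r₀ ≠ 0 := by
    rw [hv₀]
    intro h
    have h1 : Real.sqrt (1 - 2 * m / r₀) = 1 := by linarith
    exact ht₀ne (Real.sqrt_eq_one.mp h1)
  set c₀ : ℝ := 1 - v r₀ with hc₀def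
  -- sign of m / c₀
  have hmc : 0 < m / c₀ := by
    rcases lt_or_gt_of_ne hm with hneg | hpos
    · have hgt : 1 < 1 - 2 * m / r₀ := by
        have h' : 2 * m / r₀ < 0 := div_neg_of_neg_of_pos (by linarith) hr₀
        linarith
      have hsq : 1 < Real.sqrt (1 - 2 * m / r₀) := by
        rw [Real.lt_sqrt (by norm_num)]; simpa using hgt
      have hc₀neg : c₀ < 0 := by rw [hc₀def, hv₀]; linarith
      exact div_pos_of_neg_of_neg hneg hc₀neg
    · have hlt : 1 - 2 * m / r₀ < 1 := by
        have h' : 0 < 2 * m / r₀ := div_pos (by linarith) hr₀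
        linarith
      have hsq : Real.sqrt (1 - 2 * m / r₀) < 1 := by
        rw [Real.sqrt_lt' (by norm_num)]; simpa using hlt
      have hc₀pos : 0 < c₀ := by rw [hc₀def, hv₀]; linarith
      exact div_pos hpos hc₀pos
  -- derivative of u at every x > 2m, x > 0
  have key : ∀ x : ℝ, 2 * m < x → 0 < x →
      HasDerivAt u (m / (x ^ 2 * Real.sqrt (1 - 2 * m / x) * c₀)) x := by
    intro x h2mx hx
    have hxne : x ≠ 0 := ne_of_gt hx
    have htpos : (0:ℝ) < 1 - 2 * m / x := by
      rw [sub_pos, div_lt_one hx]; exact h2mx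
    have hsq : Real.sqrt (1 - 2 * m / x) ≠ 0 := ne_of_gt (Real.sqrt_pos.mpr htpos)
    have h1 : HasDerivAt (fun s : ℝ => 1 - 2 * m / s) (2 * m / x ^ 2) x := by
      simp_rw [div_eq_mul_inv]
      have h := ((hasDerivAt_inv hxne).const_mul (2 * m)).const_sub 1
      refine h.congr_deriv ?_
      ring
    have h2 : HasDerivAt (fun s : ℝ => Real.sqrt (1 - 2 * m / s))
        (2 * m / x ^ 2 / (2 * Real.sqrt (1 - 2 * m / x))) x :=
      h1.sqrt (ne_of_gt htpos)
    have h3 : HasDerivAt u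
        ((2 * m / x ^ 2 / (2 * Real.sqrt (1 - 2 * m / x))) / c₀) x := by
      have h := (h2.sub_const (v r₀)).div_const c₀
      refine h.congr_of_eventuallyEq ?_
      filter_upwards with s
      rw [hu s, hv s]
    convert h3 using 1
    set A := Real.sqrt (1 - 2 * m / x) with hA
    rw [div_div, div_div]
    rw [show x ^ 2 * (2 * A * c₀) = 2 * (x ^ 2 * A * c₀) by ring]
    rw [mul_div_mul_left m _ (two_ne_zero)]
  -- deriv u formula
  have hderiv : ∀ x : ℝ, 2 * m < x → 0 < x →
      deriv u x = m / (x ^ 2 * Real.sqrt (1 - 2 * m / x) * c₀) := fun x h1 h2 =>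
    (key x h1 h2).deriv
  -- the product is constant where it matters
  have hprod : ∀ x : ℝ, 2 * m < x → 0 < x →
      x ^ 2 * Real.sqrt (1 - 2 * m / x) * deriv u x = m / c₀ := by
    intro x h2mx hx
    have hxne : x ≠ 0 := ne_of_gt hx
    have htpos : (0:ℝ) < 1 - 2 * m / x := by
      rw [sub_pos, div_lt_one hx]; exact h2mx
    have hsq : Real.sqrt (1 - 2 * m / x) ≠ 0 := ne_of_gt (Real.sqrt_pos.mpr htpos)
    rw [hderiv x h2mx hx]
    set A := Real.sqrt (1 - 2 * m / x) with hA
    field_simp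
  -- part 1
  have part1 : u r₀ = 0 := by rw [hu r₀, sub_self, zero_div]
  -- part 2: tendsto
  have hvlim : Tendsto v atTop (nhds 1) := by
    have h0 : Tendsto (fun r : ℝ => 2 * m / r) atTop (nhds 0) :=
      Tendsto.div_atTop tendsto_const_nhds tendsto_id
    have h1 : Tendsto (fun r : ℝ => 1 - 2 * m / r) atTop (nhds 1) := by
      simpa using tendsto_const_nhds.sub h0
    have h2 : Tendsto (fun r : ℝ => Real.sqrt (1 - 2 * m / r)) atTop (nhds 1) := by
      have := (Real.continuous_sqrt.tendsto 1).comp h1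
      simpa [Function.comp_def] using this
    exact h2.congr (fun r => (hv r).symm)
  have part2 : Tendsto u atTop (nhds 1) := by
    have h : Tendsto (fun r => (v r - v r₀) / c₀) atTop (nhds ((1 - v r₀) / c₀)) :=
      (hvlim.sub tendsto_const_nhds).div_const c₀
    have heq : (1 - v r₀) / c₀ = 1 := by rw [← hc₀def]; exact div_self hc₀
    rw [heq] at h
    exact h.congr (fun r => (hu r).symm)
  -- part 3: constancy
  have part3 : ∀ r, r₀ ≤ r →
      deriv (fun s => s ^ 2 * Real.sqrt (1 - 2 * m / s) * deriv u s) r = 0 := by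
    intro r hr
    have h2mr : 2 * m < r := lt_of_lt_of_le h2m hr
    have hrpos : 0 < r := lt_of_lt_of_le hr₀ hr
    have hmem : r ∈ Ioi (max (2 * m) 0) := by
      simp only [mem_Ioi, max_lt_iff]
      exact ⟨h2mr, hrpos⟩
    have hEV : (fun s => s ^ 2 * Real.sqrt (1 - 2 * m / s) * deriv u s)
        =ᶠ[nhds r] fun _ => m / c₀ := by
      filter_upwards [isOpen_Ioi.mem_nhds hmem] with x hx
      simp only [mem_Ioi, max_lt_iff] at hx
      exact hprod x hx.1 hx.2
    rw [hEV.deriv_eq, deriv_const]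
  -- part 4: the integral
  have hintu : (∫ r in Ioi r₀, deriv u r) = 1 := by
    have h := integral_Ioi_of_hasDerivAt_of_nonneg'
      (g := u) (g' := deriv u) (a := r₀) (l := 1)
      (fun x hx => by
        have h2mx : 2 * m < x := lt_of_lt_of_le h2m hx
        have hxpos : 0 < x := lt_of_lt_of_le hr₀ hx
        rw [hderiv x h2mx hxpos]
        exact key x h2mx hxpos)
      (fun x hx => by
        have h2mx : 2 * m < x := lt_trans h2m hx
        have hxpos : 0 < x := lt_trans hr₀ hx
        have hxne : x ≠ 0 := ne_of_gt hxpos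
        have htpos : (0:ℝ) < 1 - 2 * m / x := by
          rw [sub_pos, div_lt_one hxpos]; exact h2mx
        rw [hderiv x h2mx hxpos]
        set A := Real.sqrt (1 - 2 * m / x) with hA
        have hApos : 0 < A := Real.sqrt_pos.mpr htpos
        have hpos2 : 0 < x ^ 2 * A := by positivity
        have heq : m / (x ^ 2 * A * c₀) = (m / c₀) / (x ^ 2 * A) := by
          rw [mul_comm (x ^ 2 * A) c₀, ← div_div]
        rw [heq]
        exact (div_pos hmc hpos2).le)
      part2
    rw [h, part1, sub_zero]
  have hintegrand : ∀ r ∈ Ioi r₀,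
      r ^ 2 * Real.sqrt (1 - 2 * m / r) * (deriv u r) ^ 2
        = (m / c₀) * deriv u r := by
    intro r hr
    have h2mr : 2 * m < r := lt_trans h2m hr
    have hrpos : 0 < r := lt_trans hr₀ hr
    have hp := hprod r h2mr hrpos
    calc r ^ 2 * Real.sqrt (1 - 2 * m / r) * (deriv u r) ^ 2
        = (r ^ 2 * Real.sqrt (1 - 2 * m / r) * deriv u r) * deriv u r := by ring
      _ = (m / c₀) * deriv u r := by rw [hp]
  have hint : (∫ r in Ioi r₀, r ^ 2 * Real.sqrt (1 - 2 * m / r) * (deriv u r) ^ 2)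
      = m / c₀ := by
    rw [setIntegral_congr_fun measurableSet_Ioi hintegrand,
      integral_const_mul, hintu, mul_one]
  refine ⟨part1, part2, part3, ?_⟩
  rw [hint, hc₀def, hv₀]
  have hπ : (4 : ℝ) * π ≠ 0 := by positivity
  set X := m / (1 - Real.sqrt (1 - 2 * m / r₀)) with hX
  rw [show (1 / (4 * π)) * (4 * π * X) = ((4 * π)⁻¹ * (4 * π)) * X by ring,
    inv_mul_cancel₀ hπ, one_mul]
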